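/- Assume there is a constant C > 0 such that μ(S_u = 0) ≤ C·u^{−1/2} for every integer u ≥ 1. Then there is a constant C' > 0 such that for every n ≥ 1, E_μ( ∑_{x ∈ ℤ} N_n(x)² ) ≤ C'·n^{3/2}. -/

import Mathlib

open MeasureTheory Filter
open scoped ENNReal

/-- Birkhoff sums `S_n = ∑_{k=0}^{n-1} φ ∘ T^k`. -/
def birkS {Ω : Type*} (T : Ω → Ω) (φ : Ω → ℤ) (n : ℕ) (ω : Ω) : ℤ :=
  ∑ k ∈ Finset.range n, φ (T^[k] ω)

/-- Local time `N_n(x) = ∑_{i=0}^{n-1} 1_{S_i = x}`. -/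
def locN {Ω : Type*} (T : Ω → Ω) (φ : Ω → ℤ) (n : ℕ) (x : ℤ) (ω : Ω) : ℕ :=
  ∑ i ∈ Finset.range n, if birkS T φ i ω = x then 1 else 0

section Aux

variable {Ω : Type*} [MeasurableSpace Ω] {T : Ω → Ω} {φ : Ω → ℤ}

lemma birkS_measurable (hT : Measurable T) (hφ : Measurable φ) (n : ℕ) :
    Measurable (birkS T φ n) :=
  Finset.measurable_sum _ fun k _ => hφ.comp (hT.iterate k)

lemma birkS_add (T : Ω → Ω) (φ : Ω → ℤ) (i m : ℕ) (ω : Ω) :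
    birkS T φ (i + m) ω = birkS T φ i ω + birkS T φ m (T^[i] ω) := by
  unfold birkS
  rw [Finset.sum_range_add]
  congr 1
  refine Finset.sum_congr rfl fun k _ => ?_
  rw [← Function.iterate_add_apply, Nat.add_comm]

lemma meas_birkS_eq (μ : Measure Ω) (hT : MeasurePreserving T μ μ) (hφ : Measurable φ)
    (i m : ℕ) :
    μ {ω | birkS T φ (i + m) ω = birkS T φ i ω} = μ {ω | birkS T φ m ω = 0} := by
  have hset : {ω | birkS T φ (i + m) ω = birkS T φ i ω}
      = T^[i] ⁻¹' {ω | birkS T φ m ω = 0} := by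
    ext ω
    simp only [Set.mem_setOf_eq, Set.mem_preimage, birkS_add T φ i m ω]
    omega
  rw [hset]
  exact (hT.iterate i).measure_preimage
    ((birkS_measurable hT.measurable hφ m) (measurableSet_singleton 0)).nullMeasurableSet

lemma row_bound (a : ℕ → ℝ≥0∞) (n i : ℕ) (hi : i < n) :
    ∑ j ∈ Finset.range n, a (max i j - min i j) ≤ 2 * ∑ u ∈ Finset.range n, a u := by
  classical
  have key : ∀ (s : Finset ℕ) (f : ℕ → ℕ), (∀ x ∈ s, ∀ y ∈ s, f x = f y → x = y) →
      (∀ x ∈ s, f x < n) → ∑ j ∈ s, a (f j) ≤ ∑ u ∈ Finset.range n, a u := by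
    intro s f hinj hlt
    rw [← Finset.sum_image hinj]
    refine Finset.sum_le_sum_of_subset fun u hu => ?_
    obtain ⟨x, hx, rfl⟩ := Finset.mem_image.mp hu
    exact Finset.mem_range.mpr (hlt x hx)
  rw [← Finset.sum_filter_add_sum_filter_not (Finset.range n) (fun j => j ≤ i), two_mul]
  refine add_le_add ?_ ?_
  · have h1 : ∑ j ∈ (Finset.range n).filter (fun j => j ≤ i), a (max i j - min i j)
        = ∑ j ∈ (Finset.range n).filter (fun j => j ≤ i), a (i - j) := by
      refine Finset.sum_congr rfl fun j hj => ?_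
      have := (Finset.mem_filter.mp hj).2
      congr 1
      omega
    rw [h1]
    refine key _ _ ?_ ?_
    · intro x hx y hy h
      have hx' := (Finset.mem_filter.mp hx).2
      have hy' := (Finset.mem_filter.mp hy).2
      omega
    · intro x hx
      omega
  · have h1 : ∑ j ∈ (Finset.range n).filter (fun j => ¬ j ≤ i), a (max i j - min i j)
        = ∑ j ∈ (Finset.range n).filter (fun j => ¬ j ≤ i), a (j - i) := by
      refine Finset.sum_congr rfl fun j hj => ?_
      have := (Finset.mem_filter.mp hj).2
      congr 1
      omega
    rw [h1]
    refine key _ _ ?_ ?_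
    · intro x hx y hy h
      have hx' := (Finset.mem_filter.mp hx).2
      have hy' := (Finset.mem_filter.mp hy).2
      omega
    · intro x hx
      have := Finset.mem_range.mp (Finset.mem_filter.mp hx).1
      omega

lemma sqrt_sum_bound (C : ℝ) (hC : 0 < C) (m : ℕ) :
    ∑ k ∈ Finset.range m, C * (((k + 1 : ℕ) : ℝ)) ^ (-(1 : ℝ) / 2)
      ≤ 2 * C * Real.sqrt (m + 1) := by
  have key : ∀ k : ℕ, C * (((k + 1 : ℕ) : ℝ)) ^ (-(1 : ℝ) / 2)
      ≤ C * (2 * Real.sqrt ((k + 1 : ℕ) : ℝ) - 2 * Real.sqrt (k : ℝ)) := by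
    intro k
    refine mul_le_mul_of_nonneg_left ?_ hC.le
    set s := Real.sqrt (k : ℝ) with hs
    set t := Real.sqrt ((k + 1 : ℕ) : ℝ) with ht
    have hk1 : (0:ℝ) < ((k + 1 : ℕ) : ℝ) := by positivity
    have hspos : 0 ≤ s := Real.sqrt_nonneg _
    have htpos : 0 < t := Real.sqrt_pos.2 hk1
    have hs2 : s ^ 2 = (k : ℝ) := Real.sq_sqrt (by positivity)
    have ht2 : t ^ 2 = ((k + 1 : ℕ) : ℝ) := Real.sq_sqrt hk1.le
    have hrw : (((k + 1 : ℕ) : ℝ)) ^ (-(1 : ℝ) / 2) = 1 / t := by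
      rw [show (-(1 : ℝ) / 2) = -(1/2) by ring, Real.rpow_neg hk1.le, ht,
        Real.sqrt_eq_rpow, one_div]
      rw [one_div]
    rw [hrw, div_le_iff₀ htpos]
    have hcast : ((k + 1 : ℕ) : ℝ) = (k : ℝ) + 1 := by push_cast; ring
    nlinarith [sq_nonneg (t - s)]
  calc ∑ k ∈ Finset.range m, C * (((k + 1 : ℕ) : ℝ)) ^ (-(1 : ℝ) / 2)
      ≤ ∑ k ∈ Finset.range m, C * (2 * Real.sqrt ((k + 1 : ℕ) : ℝ) - 2 * Real.sqrt (k : ℝ)) :=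
        Finset.sum_le_sum fun k _ => key k
    _ = C * ∑ k ∈ Finset.range m,
          ((fun j : ℕ => 2 * Real.sqrt (j : ℝ)) (k + 1) - (fun j : ℕ => 2 * Real.sqrt (j : ℝ)) k) := by
        rw [Finset.mul_sum]
    _ = C * (2 * Real.sqrt (m : ℝ) - 2 * Real.sqrt ((0:ℕ) : ℝ)) := by
        rw [Finset.sum_range_sub (fun j : ℕ => 2 * Real.sqrt (j : ℝ)) m]
    _ ≤ 2 * C * Real.sqrt (m + 1) := by
        simp only [Nat.cast_zero, Real.sqrt_zero]
        have : Real.sqrt (m : ℝ) ≤ Real.sqrt ((m : ℝ) + 1) :=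
          Real.sqrt_le_sqrt (by linarith)
        nlinarith

end Aux

/-- If `μ(S_u = 0) ≤ C u^{-1/2}` for all `u ≥ 1`, then there is `C' > 0` with
`E_μ(∑_{x ∈ ℤ} N_n(x)²) ≤ C' n^{3/2}` for all `n ≥ 1`. -/
theorem stmt8 {Ω : Type*} [MeasurableSpace Ω] (μ : Measure Ω) [IsProbabilityMeasure μ]
    (T : Ω → Ω) (hT : MeasurePreserving T μ μ)
    (φ : Ω → ℤ) (hφ : Measurable φ)
    (C : ℝ) (hC : 0 < C)
    (hloc : ∀ u : ℕ, 1 ≤ u →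
      μ {ω : Ω | birkS T φ u ω = 0} ≤ ENNReal.ofReal (C * (u : ℝ) ^ (-(1 : ℝ) / 2))) :
    ∃ C' : ℝ, 0 < C' ∧ ∀ n : ℕ, 1 ≤ n →
      (∫⁻ ω, ∑' x : ℤ, ((locN T φ n x ω : ℝ≥0∞)) ^ 2 ∂μ)
        ≤ ENNReal.ofReal (C' * (n : ℝ) ^ ((3 : ℝ) / 2)) := by
  classical
  refine ⟨2 + 4 * C, by positivity, ?_⟩
  intro n hn
  set a : ℕ → ℝ≥0∞ := fun u => μ {ω | birkS T φ u ω = 0} with ha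
  -- measurability of equality sets
  have hMeq : ∀ i j : ℕ, MeasurableSet {ω | birkS T φ i ω = birkS T φ j ω} := by
    intro i j
    have : {ω | birkS T φ i ω = birkS T φ j ω}
        = (fun ω => birkS T φ i ω - birkS T φ j ω) ⁻¹' {0} := by
      ext ω; simp [sub_eq_zero]
    rw [this]
    exact ((birkS_measurable hT.measurable hφ i).sub (birkS_measurable hT.measurable hφ j))
      (measurableSet_singleton 0)
  -- pointwise identity
  have hpt : ∀ ω, (∑' x : ℤ, ((locN T φ n x ω : ℝ≥0∞)) ^ 2)
      = ∑ i ∈ Finset.range n, ∑ j ∈ Finset.range n,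
          Set.indicator {ω' | birkS T φ i ω' = birkS T φ j ω'} (fun _ => (1 : ℝ≥0∞)) ω := by
    intro ω
    have h1 : ∀ x : ℤ, ((locN T φ n x ω : ℝ≥0∞)) ^ 2
        = ∑ i ∈ Finset.range n, ∑ j ∈ Finset.range n,
            (if birkS T φ i ω = x then (1 : ℝ≥0∞) else 0)
              * (if birkS T φ j ω = x then (1 : ℝ≥0∞) else 0) := by
      intro x
      have hc : ((locN T φ n x ω : ℝ≥0∞))
          = ∑ i ∈ Finset.range n, (if birkS T φ i ω = x then (1 : ℝ≥0∞) else 0) := by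
        unfold locN
        push_cast
        refine Finset.sum_congr rfl fun i _ => ?_
        split <;> simp
      rw [hc, sq, Finset.sum_mul_sum]
    simp only [h1]
    rw [Summable.tsum_finsetSum fun i _ => ENNReal.summable]
    refine Finset.sum_congr rfl fun i _ => ?_
    rw [Summable.tsum_finsetSum fun j _ => ENNReal.summable]
    refine Finset.sum_congr rfl fun j _ => ?_
    rw [tsum_eq_single (birkS T φ i ω) ?_]
    · simp [Set.indicator_apply, eq_comm]
    · intro x hx
      rw [if_neg (Ne.symm hx), zero_mul]
  -- compute the integral
  have hint : (∫⁻ ω, ∑' x : ℤ, ((locN T φ n x ω : ℝ≥0∞)) ^ 2 ∂μ)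
      = ∑ i ∈ Finset.range n, ∑ j ∈ Finset.range n,
          μ {ω | birkS T φ i ω = birkS T φ j ω} := by
    rw [lintegral_congr hpt]
    rw [lintegral_finset_sum _ fun i _ => Finset.measurable_sum _ fun j _ =>
      (measurable_const.indicator (hMeq i j))]
    refine Finset.sum_congr rfl fun i _ => ?_
    rw [lintegral_finset_sum _ fun j _ => measurable_const.indicator (hMeq i j)]
    refine Finset.sum_congr rfl fun j _ => ?_
    exact lintegral_indicator_one (hMeq i j)
  rw [hint]
  -- identify the measures with a
  have hmeq : ∀ i j : ℕ, μ {ω | birkS T φ i ω = birkS T φ j ω} = a (max i j - min i j) := by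
    intro i j
    rcases le_total i j with h | h
    · have : {ω | birkS T φ i ω = birkS T φ j ω} = {ω | birkS T φ (i + (j - i)) ω = birkS T φ i ω} := by
        ext ω
        have : i + (j - i) = j := by omega
        rw [this]
        exact eq_comm
      rw [this, meas_birkS_eq μ hT hφ i (j - i)]
      have : max i j - min i j = j - i := by omega
      rw [this]
    · have : {ω | birkS T φ i ω = birkS T φ j ω} = {ω | birkS T φ (j + (i - j)) ω = birkS T φ j ω} := by
        ext ω
        have : j + (i - j) = i := by omega
        rw [this]
      rw [this, meas_birkS_eq μ hT hφ j (i - j)]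
      have : max i j - min i j = i - j := by omega
      rw [this]
  -- bound the sum over u of a u
  have hSa : ∑ u ∈ Finset.range n, a u ≤ ENNReal.ofReal (1 + 2 * C * Real.sqrt n) := by
    obtain ⟨m, rfl⟩ : ∃ m, n = m + 1 := ⟨n - 1, by omega⟩
    rw [Finset.sum_range_succ']
    have h0 : a 0 ≤ 1 := prob_le_one
    have h1 : ∑ k ∈ Finset.range m, a (k + 1)
        ≤ ENNReal.ofReal (∑ k ∈ Finset.range m, C * (((k + 1 : ℕ) : ℝ)) ^ (-(1 : ℝ) / 2)) := by
      rw [ENNReal.ofReal_sum_of_nonneg fun k _ => by positivity]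
      exact Finset.sum_le_sum fun k _ => hloc (k + 1) (by omega)
    calc ∑ k ∈ Finset.range m, a (k + 1) + a 0
        ≤ ENNReal.ofReal (2 * C * Real.sqrt ((m : ℝ) + 1)) + ENNReal.ofReal 1 := by
          refine add_le_add (h1.trans (ENNReal.ofReal_le_ofReal ?_)) (by simpa using h0)
          exact sqrt_sum_bound C hC m
      _ ≤ ENNReal.ofReal (1 + 2 * C * Real.sqrt ((m + 1 : ℕ) : ℝ)) := by
          rw [← ENNReal.ofReal_add (by positivity) (by norm_num)]
          refine ENNReal.ofReal_le_ofReal ?_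
          push_cast
          linarith
  -- put everything together
  have hmain : ∑ i ∈ Finset.range n, ∑ j ∈ Finset.range n,
      μ {ω | birkS T φ i ω = birkS T φ j ω}
      ≤ (n : ℝ≥0∞) * (2 * ENNReal.ofReal (1 + 2 * C * Real.sqrt n)) := by
    calc ∑ i ∈ Finset.range n, ∑ j ∈ Finset.range n, μ {ω | birkS T φ i ω = birkS T φ j ω}
        = ∑ i ∈ Finset.range n, ∑ j ∈ Finset.range n, a (max i j - min i j) := by
          refine Finset.sum_congr rfl fun i _ => Finset.sum_congr rfl fun j _ => hmeq i j
      _ ≤ ∑ i ∈ Finset.range n, 2 * ∑ u ∈ Finset.range n, a u :=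
          Finset.sum_le_sum fun i hi => row_bound a n i (Finset.mem_range.mp hi)
      _ = (n : ℝ≥0∞) * (2 * ∑ u ∈ Finset.range n, a u) := by
          rw [Finset.sum_const, Finset.card_range, nsmul_eq_mul]
      _ ≤ (n : ℝ≥0∞) * (2 * ENNReal.ofReal (1 + 2 * C * Real.sqrt n)) := by
          gcongr
  refine hmain.trans ?_
  -- final real computation
  have hn1 : (1 : ℝ) ≤ (n : ℝ) := by exact_mod_cast hn
  have hnpos : (0 : ℝ) < (n : ℝ) := by linarith
  have hsq1 : (1 : ℝ) ≤ Real.sqrt n := by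
    rw [show (1:ℝ) = Real.sqrt 1 by simp]
    exact Real.sqrt_le_sqrt hn1
  have hpow : ((n : ℝ)) ^ ((3 : ℝ) / 2) = (n : ℝ) * Real.sqrt n := by
    rw [show ((3 : ℝ) / 2) = 1 + 1/2 by norm_num, Real.rpow_add hnpos, Real.rpow_one,
      Real.sqrt_eq_rpow]
  have : (n : ℝ≥0∞) * (2 * ENNReal.ofReal (1 + 2 * C * Real.sqrt n))
      = ENNReal.ofReal ((n : ℝ) * (2 * (1 + 2 * C * Real.sqrt n))) := by
    rw [ENNReal.ofReal_mul hnpos.le, ENNReal.ofReal_mul (by norm_num : (0:ℝ) ≤ 2)]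
    congr 1
    · exact (ENNReal.ofReal_natCast n).symm
    · congr 1
      exact (ENNReal.ofReal_ofNat 2).symm
  rw [this]
  refine ENNReal.ofReal_le_ofReal ?_
  rw [hpow]
  nlinarith [Real.sqrt_nonneg (n : ℝ), mul_le_mul_of_nonneg_left hsq1 hnpos.le]
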